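/- Let a ≥ 0, z > 0, and Δt be real numbers with 0 < Δt ≤ 2/√(3z) and aΔt ≤ 2. Then every complex root ξ of the quadratic (2 + aΔt)²ξ² − 4(2 + aΔt − 2Δt²z)ξ + (2 − aΔt)(2 + aΔt − 2Δt²z) = 0 satisfies |ξ| ≤ 1. -/

import Mathlib

set_option maxHeartbeats 1000000

/-- Schur–Cohn criterion for a real quadratic: if `A > 0`, `A + B + C ≥ 0`,
`A - B + C ≥ 0`, `C ≤ A`, then any real root `x` satisfies `x² ≤ 1`. -/
lemma schur_real_root (A B C x : ℝ) (hA : 0 < A) (h1 : A + B + C ≥ 0)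
    (h2 : A - B + C ≥ 0) (h3 : C ≤ A) (hr : A * x ^ 2 + B * x + C = 0) :
    x ^ 2 ≤ 1 := by
  have hCA : -A ≤ C := by linarith
  by_contra hgt
  push_neg at hgt
  have key : ((A + C) ^ 2 - B ^ 2) * x ^ 2 ≥ 0 := by
    apply mul_nonneg _ (sq_nonneg x)
    nlinarith [mul_nonneg h1 h2]
  have hbx : B * x = -(A * x ^ 2 + C) := by linarith
  have hBx : B ^ 2 * x ^ 2 = (A * x ^ 2 + C) ^ 2 := by
    calc B ^ 2 * x ^ 2 = (B * x) ^ 2 := by ring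
      _ = (-(A * x ^ 2 + C)) ^ 2 := by rw [hbx]
      _ = (A * x ^ 2 + C) ^ 2 := by ring
  nlinarith [key, hBx,
    mul_nonneg (mul_nonneg (by linarith : (0:ℝ) ≤ A - C) (by linarith : (0:ℝ) ≤ A + C))
      (by linarith : (0:ℝ) ≤ x ^ 2 - 1),
    mul_pos (mul_pos hA hA) (mul_pos (by linarith : (0:ℝ) < x ^ 2 - 1)
      (by linarith : (0:ℝ) < x ^ 2 - 1))]

/-- Sufficient CFL condition for the semi-implicit scheme: if `0 < Δt ≤ 2/√(3z)`
and `aΔt ≤ 2`, then every root of the characteristic quadratic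
`(2 + aΔt)²ξ² − 4(2 + aΔt − 2Δt²z)ξ + (2 − aΔt)(2 + aΔt − 2Δt²z) = 0`
has modulus at most 1. -/
theorem semi_implicit_CFL (a z Δt : ℝ) (ha : 0 ≤ a) (hz : 0 < z)
    (hΔt : 0 < Δt) (hCFL : Δt ≤ 2 / Real.sqrt (3 * z)) (haΔt : a * Δt ≤ 2) :
    ∀ ξ : ℂ, (((2 + a * Δt) ^ 2 : ℝ) : ℂ) * ξ ^ 2 -
        ((4 * (2 + a * Δt - 2 * Δt ^ 2 * z) : ℝ) : ℂ) * ξ +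
        (((2 - a * Δt) * (2 + a * Δt - 2 * Δt ^ 2 * z) : ℝ) : ℂ) = 0 →
      ‖ξ‖ ≤ 1 := by
  intro ξ hroot
  -- CFL gives 3 z Δt² ≤ 4
  have hsq : Real.sqrt (3 * z) > 0 := Real.sqrt_pos.2 (by linarith)
  have hΔs : Δt * Real.sqrt (3 * z) ≤ 2 := by
    rw [div_eq_mul_inv] at hCFL
    calc Δt * Real.sqrt (3 * z) ≤ (2 * (Real.sqrt (3 * z))⁻¹) * Real.sqrt (3 * z) := by
          exact mul_le_mul_of_nonneg_right hCFL (le_of_lt hsq)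
      _ = 2 := by field_simp
  have hzΔ : 3 * z * Δt ^ 2 ≤ 4 := by
    have h2 : (Δt * Real.sqrt (3 * z)) ^ 2 ≤ 2 ^ 2 := by
      apply sq_le_sq' _ hΔs
      nlinarith [mul_pos hΔt hsq]
    have h3 : (Real.sqrt (3 * z)) ^ 2 = 3 * z := Real.sq_sqrt (by linarith)
    nlinarith
  set s : ℝ := a * Δt with hs
  set m : ℝ := 2 + s - 2 * Δt ^ 2 * z with hm
  have hs0 : 0 ≤ s := mul_nonneg ha (le_of_lt hΔt)
  have hApos : (0:ℝ) < (2 + s) ^ 2 := by positivity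
  have hΔz : 0 < 2 * Δt ^ 2 * z := by positivity
  have hΔz8 : 2 * Δt ^ 2 * z ≤ 8 / 3 := by nlinarith
  -- Schur-Cohn conditions
  have h1 : (2 + s) ^ 2 + (-(4 * m)) + (2 - s) * m ≥ 0 := by nlinarith
  have h2 : (2 + s) ^ 2 - (-(4 * m)) + (2 - s) * m ≥ 0 := by nlinarith
  have h3 : (2 - s) * m ≤ (2 + s) ^ 2 := by nlinarith
  -- extract real and imaginary parts
  set x : ℝ := ξ.re with hx
  set y : ℝ := ξ.im with hy
  have hRe : (2 + s) ^ 2 * (x ^ 2 - y ^ 2) - 4 * m * x + (2 - s) * m = 0 := by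
    have := congrArg Complex.re hroot
    simpa [pow_two, Complex.mul_re, Complex.mul_im, ← hx, ← hy] using this
  have hIm : y * ((2 + s) ^ 2 * (2 * x) - 4 * m) = 0 := by
    have := congrArg Complex.im hroot
    simp [pow_two, Complex.mul_re, Complex.mul_im, ← hx, ← hy] at this
    ring_nf
    ring_nf at this
    linarith
  have hnorm : x ^ 2 + y ^ 2 ≤ 1 := by
    rcases mul_eq_zero.mp hIm with hy0 | hx0
    · -- real root case
      rw [hy0] at hRe
      have hxroot : (2 + s) ^ 2 * x ^ 2 + (-(4 * m)) * x + (2 - s) * m = 0 := by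
        ring_nf; ring_nf at hRe; linarith
      have hx1 : x ^ 2 ≤ 1 :=
        schur_real_root ((2 + s) ^ 2) (-(4 * m)) ((2 - s) * m) x hApos h1 h2 h3 hxroot
      rw [hy0]; nlinarith
    · -- complex conjugate pair: |ξ|² = C/A
      have hB : 4 * m = (2 + s) ^ 2 * (2 * x) := by linarith
      have h4 : 4 * m * x = (2 + s) ^ 2 * (2 * x) * x := by rw [← hB]
      have hCA : (2 + s) ^ 2 * (x ^ 2 + y ^ 2) = (2 - s) * m := by
        linear_combination -hRe - h4
      nlinarith [hCA, h3, hApos]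
  have habs : (‖ξ‖) ^ 2 ≤ 1 := by
    rw [Complex.sq_norm, Complex.normSq_apply, ← hx, ← hy]
    nlinarith
  nlinarith [habs, norm_nonneg ξ]
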